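/- arXiv:2304.00853 — 2 statements merged into one kernel-verified Lean document; each statement's English description precedes it below -/
import Mathlib

section
/- Let A = {a_1 < ... < a_n} ⊂ ℝ, let D be its set of consecutive differences, and suppose D' ⊆ D and K ≥ 1 are such that |A_d| ≥ K for all d ∈ D', where A_d = {a_i ∈ A : a_{i+1} - a_i = d}. Split D' = D'_big ⊔ D'_small with every element of D'_big larger than every element of D'_small and |D'_small| - 1 ≤ |D'_big| ≤ |D'_small|. Then for each a_i with a_{i+1} - a_i ∈ D'_big, the translate a_i + D'_small is contained in the open interval (a_i, a_{i+1}), and consequently |A + A - A| ≥ (1/4)|D'|² K. -/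
open Finset Pointwise

/-- Squeezing lemma: with `A = {a 0 < ... < a (n-1)}`, `D` the consecutive differences,
`A_d` the left endpoints of gaps of length `d`, `D' ⊆ D` with `|A_d| ≥ K` for `d ∈ D'`,
and `D' = D'_big ⊔ D'_small` with every element of `D'_big` larger than every element of
`D'_small` and `|D'_small| - 1 ≤ |D'_big| ≤ |D'_small|`: each translate `a i + D'_small`
with gap `a (i+1) - a i ∈ D'_big` lies in `(a i, a (i+1))`, and `|A+A-A| ≥ (1/4)|D'|² K`. -/
theorem stmt1 (n : ℕ) (hn : 2 ≤ n) (a : ℕ → ℝ)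
    (ha : ∀ i j : ℕ, i < j → j < n → a i < a j)
    (K : ℕ) (hK : 1 ≤ K)
    (D' Dbig Dsmall : Finset ℝ)
    (hD' : D' ⊆ (Finset.range (n - 1)).image (fun i => a (i + 1) - a i))
    (hAd : ∀ d ∈ D',
      K ≤ (((Finset.range (n - 1)).filter (fun i => a (i + 1) - a i = d)).image a).card)
    (hsplit : D' = Dbig ∪ Dsmall) (hdisj : Disjoint Dbig Dsmall)
    (horder : ∀ x ∈ Dbig, ∀ y ∈ Dsmall, y < x)
    (hsize1 : (Dsmall.card : ℤ) - 1 ≤ Dbig.card) (hsize2 : Dbig.card ≤ Dsmall.card) :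
    (∀ i < n - 1, a (i + 1) - a i ∈ Dbig →
      ∀ d ∈ Dsmall, a i + d ∈ Set.Ioo (a i) (a (i + 1))) ∧
    ((1 : ℝ) / 4) * (D'.card : ℝ) ^ 2 * K ≤
      (((Finset.range n).image a + (Finset.range n).image a
        - (Finset.range n).image a).card : ℝ) := by
  have hpos : ∀ d ∈ D', 0 < d := by
    intro d hd
    obtain ⟨i, hi, rfl⟩ := Finset.mem_image.1 (hD' hd)
    have hi' : i < n - 1 := Finset.mem_range.1 hi
    have := ha i (i+1) (Nat.lt_succ_self i) (by omega)
    linarith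
  have part1 : ∀ i < n - 1, a (i + 1) - a i ∈ Dbig →
      ∀ d ∈ Dsmall, a i + d ∈ Set.Ioo (a i) (a (i + 1)) := by
    intro i hi hbig d hd
    have hdD' : d ∈ D' := by rw [hsplit]; exact Finset.mem_union_right _ hd
    have h0 := hpos d hdD'
    have hlt := horder _ hbig _ hd
    constructor <;> [linarith; linarith]
  refine ⟨part1, ?_⟩
  rcases D'.eq_empty_or_nonempty with hDe | ⟨d₀, hd₀⟩
  · simp [hDe]
  -- K ≤ n - 1
  have hKn : K ≤ n - 1 := by
    have h1 := hAd d₀ hd₀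
    calc K ≤ _ := h1
      _ ≤ ((Finset.range (n - 1)).filter (fun i => a (i + 1) - a i = d₀)).card :=
        Finset.card_image_le
      _ ≤ (Finset.range (n-1)).card := Finset.card_filter_le _ _
      _ = n - 1 := Finset.card_range _
  have haInj : Set.InjOn a (Finset.range n) := by
    intro i hi j hj h
    simp only [Finset.coe_range, Set.mem_Iio] at hi hj
    rcases lt_trichotomy i j with hlt | he | hlt
    · exact absurd h (ne_of_lt (ha i j hlt hj))
    · exact he
    · exact absurd h.symm (ne_of_lt (ha j i hlt hi))
  set A' := (Finset.range n).image a with hA'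
  have hcardA' : A'.card = n := by
    rw [hA', Finset.card_image_of_injOn haInj, Finset.card_range]
  set I := (Finset.range (n-1)).filter (fun i => a (i + 1) - a i ∈ Dbig) with hI
  -- card I ≥ Dbig.card * K
  have hIeq : I = Dbig.biUnion
      (fun d => (Finset.range (n-1)).filter (fun i => a (i + 1) - a i = d)) := by
    ext i
    simp only [hI, Finset.mem_filter, Finset.mem_biUnion]
    constructor
    · rintro ⟨h1, h2⟩; exact ⟨_, h2, h1, rfl⟩
    · rintro ⟨d, hd, h1, h2⟩; exact ⟨h1, h2 ▸ hd⟩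
  have hIcard : Dbig.card * K ≤ I.card := by
    rw [hIeq, Finset.card_biUnion]
    · calc Dbig.card * K = ∑ _d ∈ Dbig, K := by rw [Finset.sum_const, smul_eq_mul]
        _ ≤ _ := by
          apply Finset.sum_le_sum
          intro d hd
          have hdD' : d ∈ D' := by rw [hsplit]; exact Finset.mem_union_left _ hd
          exact le_trans (hAd d hdD') Finset.card_image_le
    · intro x hx y hy hxy
      rw [Function.onFun, Finset.disjoint_left]
      intro i hi hi2
      rw [Finset.mem_filter] at hi hi2
      exact hxy (hi.2.symm.trans hi2.2)
  -- the squeezed set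
  set f : ℕ × ℝ → ℝ := fun p => a p.1 + p.2 with hf
  set P := I ×ˢ Dsmall with hP
  have hsq : ∀ p ∈ P, a p.1 < f p ∧ f p < a (p.1 + 1) ∧ p.1 < n - 1 := by
    rintro ⟨i, d⟩ hp
    rw [hP, Finset.mem_product] at hp
    obtain ⟨hi, hd⟩ := hp
    rw [hI, Finset.mem_filter, Finset.mem_range] at hi
    have := part1 i hi.1 hi.2 d hd
    exact ⟨this.1, this.2, hi.1⟩
  have hfInj : Set.InjOn f P := by
    rintro ⟨i, d⟩ hp ⟨j, e⟩ hq h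
    obtain ⟨h1, h2, h3⟩ := hsq _ hp
    obtain ⟨h4, h5, h6⟩ := hsq _ hq
    simp only [hf] at h h1 h2 h4 h5
    have hij : i = j := by
      rcases lt_trichotomy i j with hlt | he | hlt
      · have : a (i+1) ≤ a j := by
          rcases Nat.lt_or_ge (i+1) j with hl | hg
          · exact le_of_lt (ha (i+1) j hl (by omega))
          · have : i + 1 = j := by omega
            rw [this]
        linarith
      · exact he
      · have : a (j+1) ≤ a i := by
          rcases Nat.lt_or_ge (j+1) i with hl | hg
          · exact le_of_lt (ha (j+1) i hl (by omega))
          · have : j + 1 = i := by omega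
            rw [this]
        linarith
    subst hij
    have : d = e := by linarith
    rw [this]
  set T := P.image f with hT
  have hTcard : Dbig.card * K * Dsmall.card ≤ T.card := by
    rw [hT, Finset.card_image_of_injOn hfInj, hP, Finset.card_product]
    exact Nat.mul_le_mul_right _ hIcard
  have hTdisj : Disjoint T A' := by
    rw [Finset.disjoint_left]
    intro x hx hxA
    rw [hT, Finset.mem_image] at hx
    obtain ⟨p, hp, rfl⟩ := hx
    obtain ⟨h1, h2, h3⟩ := hsq _ hp
    rw [hA', Finset.mem_image] at hxA
    obtain ⟨j, hj, hje⟩ := hxA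
    rw [Finset.mem_range] at hj
    rcases Nat.lt_or_ge j (p.1 + 1) with hl | hg
    · have : a j ≤ a p.1 := by
        rcases Nat.lt_or_ge j p.1 with hl' | hg'
        · exact le_of_lt (ha j p.1 hl' (by omega))
        · have : j = p.1 := by omega
          rw [this]
      linarith
    · have : a (p.1 + 1) ≤ a j := by
        rcases Nat.lt_or_ge (p.1+1) j with hl' | hg'
        · exact le_of_lt (ha _ j hl' hj)
        · have : p.1 + 1 = j := by omega
          rw [this]
      linarith
  have hsub : T ∪ A' ⊆ A' + A' - A' := by
    intro x hx
    rw [Finset.mem_union] at hx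
    have hmem : ∀ i < n, a i ∈ A' := fun i hi =>
      Finset.mem_image.2 ⟨i, Finset.mem_range.2 hi, rfl⟩
    rcases hx with hx | hx
    · rw [hT, Finset.mem_image] at hx
      obtain ⟨⟨i, d⟩, hp, rfl⟩ := hx
      rw [hP, Finset.mem_product] at hp
      obtain ⟨hi, hd⟩ := hp
      rw [hI, Finset.mem_filter, Finset.mem_range] at hi
      have hdD' : d ∈ D' := by rw [hsplit]; exact Finset.mem_union_right _ hd
      obtain ⟨j, hj, hje⟩ := Finset.mem_image.1 (hD' hdD')
      rw [Finset.mem_range] at hj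
      rw [Finset.mem_sub]
      refine ⟨a i + a (j+1), ?_, a j, hmem j (by omega), ?_⟩
      · rw [Finset.mem_add]
        exact ⟨a i, hmem i (by omega), a (j+1), hmem (j+1) (by omega), rfl⟩
      · simp only [hf]; rw [← hje]; ring
    · obtain ⟨j, hj, rfl⟩ := Finset.mem_image.1 hx
      rw [Finset.mem_range] at hj
      rw [Finset.mem_sub]
      refine ⟨a j + a 0, ?_, a 0, hmem 0 (by omega), by ring⟩
      rw [Finset.mem_add]
      exact ⟨a j, hmem j hj, a 0, hmem 0 (by omega), rfl⟩
  have hbig : Dbig.card * K * Dsmall.card + n ≤ (A' + A' - A').card := by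
    calc Dbig.card * K * Dsmall.card + n ≤ T.card + A'.card := by
          rw [hcardA']; exact Nat.add_le_add_right hTcard n
      _ = (T ∪ A').card := (Finset.card_union_of_disjoint hTdisj).symm
      _ ≤ _ := Finset.card_le_card hsub
  -- final arithmetic
  have hDcard : D'.card = Dbig.card + Dsmall.card := by
    rw [hsplit, Finset.card_union_of_disjoint hdisj]
  have hc := hbig
  have hbR : (Dbig.card * K * Dsmall.card + n : ℝ) ≤ ((A' + A' - A').card : ℝ) := by
    exact_mod_cast hbig
  rw [hDcard]
  push_cast
  have hKnR : (K : ℝ) ≤ n := by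
    have : K ≤ n := le_trans hKn (Nat.sub_le n 1)
    exact_mod_cast this
  have hs1 : (Dsmall.card : ℝ) - 1 ≤ Dbig.card := by exact_mod_cast hsize1
  have hs2 : (Dbig.card : ℝ) ≤ Dsmall.card := by exact_mod_cast hsize2
  have hK1 : (1 : ℝ) ≤ K := by exact_mod_cast hK
  have hsq1 : ((Dbig.card : ℝ) - Dsmall.card) ^ 2 ≤ 1 := by nlinarith
  have hKnn : (0 : ℝ) ≤ K := by positivity
  have h2 := mul_le_mul_of_nonneg_right hsq1 hKnn
  nlinarith [hbR, h2]
end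

section
/- Let X and Y be finite nonempty sets in an abelian group, and let k, l be non-negative integers with k + l > 1. Then |kX - lX| ≤ |X + Y|^{k+l} / |Y|^{k+l - 1}. -/
open Finset Pointwise

/-- The `k`-fold sumset of a finite set in an abelian group. -/
def foldSum {G : Type*} [AddCommGroup G] [DecidableEq G] : ℕ → Finset G → Finset G
  | 0, _ => {0}
  | n + 1, A => foldSum n A + A

lemma foldSum_eq_nsmul {G : Type*} [AddCommGroup G] [DecidableEq G] (k : ℕ) (X : Finset G) :
    foldSum k X = k • X := by
  induction k with
  | zero => rfl
  | succ n ih => rw [foldSum, ih, succ_nsmul]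

/-- Plünnecke–Ruzsa: for finite nonempty `X, Y` in an abelian group and `k + l > 1`,
`|kX - lX| ≤ |X + Y|^{k+l} / |Y|^{k+l-1}`. -/
theorem stmt11 {G : Type*} [AddCommGroup G] [DecidableEq G]
    (X Y : Finset G) (hX : X.Nonempty) (hY : Y.Nonempty)
    (k l : ℕ) (hkl : 1 < k + l) :
    ((foldSum k X - foldSum l X).card : ℝ) ≤
      ((X + Y).card : ℝ) ^ (k + l) / (Y.card : ℝ) ^ (k + l - 1) := by
  have h := Finset.pluennecke_ruzsa_inequality_nsmul_sub_nsmul_add hY X k l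
  rw [foldSum_eq_nsmul, foldSum_eq_nsmul]
  rw [add_comm Y X] at h
  have h1 : (((k • X - l • X).card : ℚ≥0) : ℝ) ≤
      (((((X + Y).card : ℚ≥0) / (Y.card : ℚ≥0)) ^ (k + l) * (Y.card : ℚ≥0) : ℚ≥0) : ℝ) := by
    exact_mod_cast h
  have h' : ((k • X - l • X).card : ℝ) ≤ ((X + Y).card / Y.card : ℝ) ^ (k + l) * Y.card := by
    push_cast at h1
    exact h1
  have hY0 : (0 : ℝ) < Y.card := by exact_mod_cast hY.card_pos
  have hkl1 : k + l - 1 + 1 = k + l := by omega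
  calc ((k • X - l • X).card : ℝ)
      ≤ ((X + Y).card / Y.card : ℝ) ^ (k + l) * Y.card := h'
    _ = ((X + Y).card : ℝ) ^ (k + l) / (Y.card : ℝ) ^ (k + l - 1) := by
        rw [div_pow, ← hkl1, pow_succ, Nat.add_sub_cancel]
        field_simp
        ring
end
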